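/- Let τ = τ¹-τ²-⋯-τˢ be a multi-pattern (s ≥ 1) with every block τʲ nonempty. Then for all k ≥ 1, in ℚ[[x]]: A_τ(x;k) = Σ_{j=1}^{s} A_{τʲ}(x;k) · Π_{i=1}^{j−1} ((k·x − 1)·A_{τⁱ}(x;k) + 1). -/

import Mathlib

/-- A word `σ : Fin n → Fin k` has an occurrence of the subword pattern `p : Fin m → Fin l`
at position `i` if `i + m ≤ n` and the corresponding letters are order-isomorphic to `p`. -/
def OccursAt {m l n k : ℕ} (p : Fin m → Fin l) (σ : Fin n → Fin k) (i : ℕ) : Prop :=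
  ∃ h : i + m ≤ n, ∀ a b : Fin m,
    (σ ⟨i + a, lt_of_lt_of_le (Nat.add_lt_add_left a.isLt i) h⟩ <
      σ ⟨i + b, lt_of_lt_of_le (Nat.add_lt_add_left b.isLt i) h⟩) ↔ p a < p b

/-- `σ` avoids the subword pattern `p`. -/
def AvoidsPat {m l n k : ℕ} (p : Fin m → Fin l) (σ : Fin n → Fin k) : Prop :=
  ∀ i : ℕ, ¬ OccursAt p σ i

/-- `σ` contains the multi-pattern `τ⁰-τ¹-⋯` (blocks indexed by `Fin s`): there are
positions `i j`, with each block's occurrence ending before the next block's start,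
such that `τ j` occurs at `i j` for every `j`. -/
def ContainsMulti {s : ℕ} {m r : Fin s → ℕ} (τ : ∀ j : Fin s, Fin (m j) → Fin (r j))
    {n k : ℕ} (σ : Fin n → Fin k) : Prop :=
  ∃ i : Fin s → ℕ,
    (∀ (j : Fin s) (h : (j : ℕ) + 1 < s), i j + m j ≤ i ⟨(j : ℕ) + 1, h⟩) ∧
      ∀ j : Fin s, OccursAt (τ j) σ (i j)

/-- Generating function for the number of `k`-ary words avoiding the subword pattern `p`. -/
noncomputable def Apat {m l : ℕ} (p : Fin m → Fin l) (k : ℕ) : PowerSeries ℚ :=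
  PowerSeries.mk fun n => (Nat.card {σ : Fin n → Fin k // AvoidsPat p σ} : ℚ)

/-- Generating function for the number of `k`-ary words avoiding a multi-pattern. -/
noncomputable def Amulti {s : ℕ} {m r : Fin s → ℕ} (τ : ∀ j : Fin s, Fin (m j) → Fin (r j))
    (k : ℕ) : PowerSeries ℚ :=
  PowerSeries.mk fun n => (Nat.card {σ : Fin n → Fin k // ¬ ContainsMulti τ σ} : ℚ)

namespace Stmt14
variable {k : ℕ}

def take {n : ℕ} (e : ℕ) (h : e ≤ n) (σ : Fin n → Fin k) : Fin e → Fin k :=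
  fun a => σ ⟨a, lt_of_lt_of_le a.isLt h⟩

def drop {n : ℕ} (e : ℕ) (h : e ≤ n) (σ : Fin n → Fin k) : Fin (n - e) → Fin k :=
  fun a => σ ⟨e + a, by have := a.isLt; omega⟩

def joinAt {n : ℕ} (e : ℕ) (h : e ≤ n) (w : Fin e → Fin k) (u : Fin (n - e) → Fin k) :
    Fin n → Fin k :=
  fun a => if ha : (a : ℕ) < e then w ⟨a, ha⟩ else u ⟨(a : ℕ) - e, by have := a.isLt; omega⟩

lemma take_joinAt {n : ℕ} (e : ℕ) (h : e ≤ n) (w : Fin e → Fin k) (u : Fin (n - e) → Fin k) :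
    take e h (joinAt e h w u) = w := by
  funext a
  have : ((⟨(a : ℕ), lt_of_lt_of_le a.isLt h⟩ : Fin n) : ℕ) < e := a.isLt
  simp only [take, joinAt, dif_pos this]

lemma drop_joinAt {n : ℕ} (e : ℕ) (h : e ≤ n) (w : Fin e → Fin k) (u : Fin (n - e) → Fin k) :
    drop e h (joinAt e h w u) = u := by
  funext a
  have h1 : ¬ ((e + (a : ℕ)) < e) := by omega
  simp only [drop, joinAt, dif_neg h1]
  congr 1
  exact Fin.ext (by simp)

lemma joinAt_take_drop {n : ℕ} (e : ℕ) (h : e ≤ n) (σ : Fin n → Fin k) :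
    joinAt e h (take e h σ) (drop e h σ) = σ := by
  funext a
  by_cases ha : (a : ℕ) < e
  · simp only [joinAt, dif_pos ha, take]
  · simp only [joinAt, dif_neg ha, drop]
    congr 1
    exact Fin.ext (by simp; omega)

lemma occursAt_take {m l n : ℕ} (p : Fin m → Fin l) {e : ℕ} (h : e ≤ n) (σ : Fin n → Fin k)
    (i : ℕ) : OccursAt p (take e h σ) i ↔ i + m ≤ e ∧ OccursAt p σ i := by
  constructor
  · rintro ⟨hi, hc⟩
    exact ⟨hi, le_trans hi h, fun a b => hc a b⟩
  · rintro ⟨hie, _, hc⟩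
    exact ⟨hie, fun a b => hc a b⟩

lemma occursAt_drop {m l n : ℕ} (p : Fin m → Fin l) {e : ℕ} (h : e ≤ n) (σ : Fin n → Fin k)
    (i : ℕ) : OccursAt p (drop e h σ) i ↔ OccursAt p σ (e + i) := by
  have key : ∀ (a : Fin m) (pf1 : e + i + (a : ℕ) < n) (pf2 : i + (a : ℕ) < n - e),
      σ ⟨e + i + (a : ℕ), pf1⟩ = drop e h σ ⟨i + (a : ℕ), pf2⟩ := by
    intro a pf1 pf2
    simp only [drop]
    congr 1
    exact Fin.ext (by simp [Nat.add_assoc])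
  constructor
  · rintro ⟨hi, hc⟩
    refine ⟨by omega, fun a b => ?_⟩
    rw [key a (by omega) (by omega), key b (by omega) (by omega)]
    exact hc a b
  · rintro ⟨hi, hc⟩
    refine ⟨by omega, fun a b => ?_⟩
    rw [← key a (by omega) (by omega), ← key b (by omega) (by omega)]
    exact hc a b


/-- `e` is the minimal endpoint of an occurrence of `p` in `σ`. -/
def FirstEnd {m l n : ℕ} (p : Fin m → Fin l) (σ : Fin n → Fin k) (e : ℕ) : Prop :=
  (∃ i, i + m = e ∧ OccursAt p σ i) ∧ ∀ i, OccursAt p σ i → e ≤ i + m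

lemma firstEnd_unique {m l n : ℕ} {p : Fin m → Fin l} {σ : Fin n → Fin k} {e e' : ℕ}
    (h : FirstEnd p σ e) (h' : FirstEnd p σ e') : e = e' := by
  obtain ⟨⟨i, hie, hocc⟩, hmin⟩ := h
  obtain ⟨⟨i', hie', hocc'⟩, hmin'⟩ := h'
  have := hmin i' hocc'
  have := hmin' i hocc
  omega

lemma exists_firstEnd {m l n : ℕ} {p : Fin m → Fin l} {σ : Fin n → Fin k}
    (h : ¬ AvoidsPat p σ) : ∃ e, FirstEnd p σ e := by
  classical
  simp only [AvoidsPat, not_forall, not_not] at h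
  obtain ⟨i, hi⟩ := h
  have hS : ∃ e, ∃ j, j + m = e ∧ OccursAt p σ j := ⟨i + m, i, rfl, hi⟩
  refine ⟨Nat.find hS, Nat.find_spec hS, fun j hj => Nat.find_le ⟨j, rfl, hj⟩⟩

lemma firstEnd_le {m l n : ℕ} {p : Fin m → Fin l} {σ : Fin n → Fin k} {e : ℕ}
    (h : FirstEnd p σ e) : e ≤ n := by
  obtain ⟨⟨i, hie, hocc, _⟩, _⟩ := h
  omega

lemma firstEnd_take_iff {m l n : ℕ} {p : Fin m → Fin l} {σ : Fin n → Fin k} {e : ℕ}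
    (h : e ≤ n) : FirstEnd p (take e h σ) e ↔ FirstEnd p σ e := by
  constructor
  · rintro ⟨⟨i, hie, hocc⟩, hmin⟩
    refine ⟨⟨i, hie, ((occursAt_take p h σ i).1 hocc).2⟩, fun j hj => ?_⟩
    by_contra hlt
    exact absurd (hmin j ((occursAt_take p h σ j).2 ⟨by omega, hj⟩)) (by omega)
  · rintro ⟨⟨i, hie, hocc⟩, hmin⟩
    refine ⟨⟨i, hie, (occursAt_take p h σ i).2 ⟨by omega, hocc⟩⟩, fun j hj => ?_⟩
    exact hmin j ((occursAt_take p h σ j).1 hj).2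

/-- Generic partition of a subtype count. -/
lemma card_split {α : Type*} [Finite α] (p q : α → Prop) :
    Nat.card {x // p x} = Nat.card {x // p x ∧ q x} + Nat.card {x // p x ∧ ¬ q x} := by
  classical
  rw [← Nat.card_sum]
  exact (Nat.card_congr (((Equiv.subtypeSubtypeEquivSubtypeInter p q).symm.sumCongr
    (Equiv.subtypeSubtypeEquivSubtypeInter p (fun x => ¬ q x)).symm).trans
    (Equiv.sumCompl fun x : {x // p x} => q x.1))).symm

lemma nat_card_sigma {N : ℕ} (f : Fin N → Type*) [∀ e, Finite (f e)] :
    Nat.card (Σ e, f e) = ∑ e, Nat.card (f e) := by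
  classical
  letI : ∀ e, Fintype (f e) := fun e => Fintype.ofFinite _
  simp [Nat.card_eq_fintype_card, Fintype.card_sigma]

/-- Split a word at `e`, with a predicate depending only on the prefix. -/
def splitPredEquiv {n : ℕ} (e : ℕ) (h : e ≤ n) (P : (Fin e → Fin k) → Prop)
    (Q : (Fin (n - e) → Fin k) → Prop) :
    {σ : Fin n → Fin k // P (take e h σ) ∧ Q (drop e h σ)} ≃
      {w : Fin e → Fin k // P w} × {u : Fin (n - e) → Fin k // Q u} where
  toFun σ := (⟨take e h σ.1, σ.2.1⟩, ⟨drop e h σ.1, σ.2.2⟩)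
  invFun wu := ⟨joinAt e h wu.1.1 wu.2.1, by
    rw [take_joinAt, drop_joinAt]; exact ⟨wu.1.2, wu.2.2⟩⟩
  left_inv σ := Subtype.ext (joinAt_take_drop e h σ.1)
  right_inv wu := by
    ext : 1
    · exact Subtype.ext (take_joinAt e h wu.1.1 wu.2.1)
    · exact Subtype.ext (drop_joinAt e h wu.1.1 wu.2.1)


variable {m l : ℕ} {p : Fin m → Fin l}

lemma card_avoids_zero (hm : 1 ≤ m) (p : Fin m → Fin l) :
    Nat.card {σ : Fin 0 → Fin k // AvoidsPat p σ} = 1 := by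
  have hall : ∀ σ : Fin 0 → Fin k, AvoidsPat p σ := by
    rintro σ i ⟨hi, -⟩; omega
  rw [Nat.card_congr (Equiv.subtypeUnivEquiv hall), Nat.card_fun]
  simp

lemma card_firstEnd_zero (hm : 1 ≤ m) (p : Fin m → Fin l) :
    Nat.card {w : Fin 0 → Fin k // FirstEnd p w 0} = 0 := by
  have : IsEmpty {w : Fin 0 → Fin k // FirstEnd p w 0} := by
    refine ⟨fun w => ?_⟩
    obtain ⟨⟨i, hie, -⟩, -⟩ := w.2
    omega
  exact Nat.card_of_isEmpty

lemma card_step (hm : 1 ≤ m) (p : Fin m → Fin l) (f : ℕ) :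
    Nat.card {σ : Fin f → Fin k // AvoidsPat p σ} * k =
      Nat.card {w : Fin (f+1) → Fin k // AvoidsPat p w} +
        Nat.card {w : Fin (f+1) → Fin k // FirstEnd p w (f+1)} := by
  have hf : f ≤ f + 1 := by omega
  have h1 : Nat.card {w : Fin (f+1) → Fin k // AvoidsPat p (take f hf w)} =
      Nat.card {σ : Fin f → Fin k // AvoidsPat p σ} * k := by
    rw [Nat.card_congr ((Equiv.subtypeEquivRight (fun w =>
        (and_iff_left trivial).symm)).trans
      (splitPredEquiv f hf (AvoidsPat p) (fun _ => True))), Nat.card_prod]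
    congr 1
    rw [Nat.card_congr (Equiv.subtypeUnivEquiv (fun _ => trivial)), Nat.card_fun]
    simp [show f + 1 - f = 1 by omega]
  have h2 := card_split (fun w : Fin (f+1) → Fin k => AvoidsPat p (take f hf w))
    (AvoidsPat p)
  have h3 : Nat.card {w : Fin (f+1) → Fin k // AvoidsPat p (take f hf w) ∧ AvoidsPat p w}
      = Nat.card {w : Fin (f+1) → Fin k // AvoidsPat p w} := by
    refine Nat.card_congr (Equiv.subtypeEquivRight (fun w => ⟨fun h => h.2, fun h => ⟨?_, h⟩⟩))
    intro j hj
    exact h j ((occursAt_take p hf w j).1 hj).2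
  have h4 : Nat.card {w : Fin (f+1) → Fin k // AvoidsPat p (take f hf w) ∧ ¬ AvoidsPat p w}
      = Nat.card {w : Fin (f+1) → Fin k // FirstEnd p w (f+1)} := by
    refine Nat.card_congr (Equiv.subtypeEquivRight (fun w => ⟨?_, ?_⟩))
    · rintro ⟨hP, hnA⟩
      obtain ⟨e, he⟩ := exists_firstEnd hnA
      have hle : e ≤ f + 1 := firstEnd_le he
      have : ¬ e ≤ f := by
        intro hef
        obtain ⟨⟨i, hie, hocc⟩, -⟩ := he
        exact hP i ((occursAt_take p hf w i).2 ⟨by omega, hocc⟩)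
      have : e = f + 1 := by omega
      rwa [this] at he
    · rintro ⟨⟨i, hie, hocc⟩, hmin⟩
      constructor
      · intro j hj
        have h5 := (occursAt_take p hf w j).1 hj
        have := hmin j h5.2
        omega
      · intro h
        exact h i hocc
  omega

lemma containsMulti_iff {s n : ℕ} {ms rs : Fin s → ℕ} (τ : ∀ j : Fin s, Fin (ms j) → Fin (rs j))
    (σ : Fin n → Fin k) :
    ContainsMulti τ σ ↔ ∃ I : ℕ → ℕ,
      (∀ t (h : t + 1 < s), I t + ms ⟨t, by omega⟩ ≤ I (t + 1)) ∧
        ∀ t (h : t < s), OccursAt (τ ⟨t, h⟩) σ (I t) := by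
  constructor
  · rintro ⟨i, hc, ho⟩
    refine ⟨fun t => if h : t < s then i ⟨t, h⟩ else 0, fun t h => ?_, fun t h => ?_⟩
    · simp only [dif_pos (show t < s by omega), dif_pos h]
      exact hc ⟨t, by omega⟩ h
    · simp only [dif_pos h]
      exact ho ⟨t, h⟩
  · rintro ⟨I, hc, ho⟩
    exact ⟨fun j => I j, fun j h => hc j h, fun j => ho j j.isLt⟩

section Multi
variable {s' : ℕ} {ms rs : Fin (s' + 1) → ℕ}

lemma contains_iff_suffix (τ : ∀ j : Fin (s' + 1), Fin (ms j) → Fin (rs j))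
    {n : ℕ} (σ : Fin n → Fin k) (e : ℕ) (he : e ≤ n) (hfe : FirstEnd (τ 0) σ e) :
    ContainsMulti τ σ ↔ ContainsMulti (fun j : Fin s' => τ j.succ) (drop e he σ) := by
  rw [containsMulti_iff, containsMulti_iff]
  constructor
  · rintro ⟨I, hc, ho⟩
    -- every I (t+1) is ≥ e
    have hge : ∀ t, t + 1 < s' + 1 → e ≤ I (t + 1) := by
      intro t
      induction t with
      | zero =>
        intro h
        have h1 := hc 0 h
        have h2 := hfe.2 (I 0) (by simpa using ho 0 (by omega))
        have h3 : ms ⟨0, by omega⟩ = ms 0 := congrArg ms (Fin.ext (by simp))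
        omega
      | succ t ih =>
        intro h
        have h1 := hc (t + 1) h
        have h2 := ih (by omega)
        omega
    refine ⟨fun t => I (t + 1) - e, fun t h => ?_, fun t h => ?_⟩
    · show I (t + 1) - e + ms (Fin.succ ⟨t, by omega⟩) ≤ I (t + 1 + 1) - e
      have h1 := hc (t + 1) (by omega)
      have h2 := hge t (by omega)
      have h3 := hge (t + 1) (by omega)
      have h4 : ms (Fin.succ ⟨t, by omega⟩) = ms ⟨t + 1, by omega⟩ := rfl
      omega
    · rw [occursAt_drop]
      have h2 := hge t (by omega)
      have : e + (I (t + 1) - e) = I (t + 1) := by omega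
      rw [this]
      exact ho (t + 1) (by omega)
  · rintro ⟨I, hc, ho⟩
    obtain ⟨⟨i0, hi0e, hocc0⟩, -⟩ := hfe
    refine ⟨fun t => Nat.casesOn t i0 (fun t' => e + I t'), fun t h => ?_, fun t h => ?_⟩
    · match t with
      | 0 =>
        show i0 + ms ⟨0, by omega⟩ ≤ e + I 0
        have h3 : ms ⟨0, by omega⟩ = ms 0 := congrArg ms (Fin.ext (by simp))
        omega
      | (t + 1) =>
        show e + I t + ms ⟨t + 1, by omega⟩ ≤ e + I (t + 1)
        have h1 := hc t (by omega)
        have h2 : ms (Fin.succ ⟨t, by omega⟩) = ms ⟨t + 1, by omega⟩ := rfl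
        omega
    · match t with
      | 0 =>
        show OccursAt (τ ⟨0, h⟩) σ i0
        have h3 : (⟨0, h⟩ : Fin (s' + 1)) = 0 := Fin.ext (by simp)
        rw [h3]
        exact hocc0
      | (t + 1) =>
        show OccursAt (τ ⟨t + 1, h⟩) σ (e + I t)
        have h1 := ho t (by omega)
        rw [occursAt_drop] at h1
        exact h1

lemma card_slice (τ : ∀ j : Fin (s' + 1), Fin (ms j) → Fin (rs j)) {n e : ℕ} (he : e ≤ n) :
    Nat.card {σ : Fin n → Fin k // FirstEnd (τ 0) σ e ∧ ¬ ContainsMulti τ σ} =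
      Nat.card {w : Fin e → Fin k // FirstEnd (τ 0) w e} *
        Nat.card {u : Fin (n - e) → Fin k //
          ¬ ContainsMulti (fun j : Fin s' => τ j.succ) u} := by
  rw [← Nat.card_prod]
  refine Nat.card_congr ((Equiv.subtypeEquivRight ?_).trans (splitPredEquiv e he _ _))
  intro σ
  constructor
  · rintro ⟨hF, hC⟩
    exact ⟨(firstEnd_take_iff he).2 hF, fun hc => hC ((contains_iff_suffix τ σ e he hF).2 hc)⟩
  · rintro ⟨hF, hC⟩
    have hF' := (firstEnd_take_iff he).1 hF
    exact ⟨hF', fun hc => hC ((contains_iff_suffix τ σ e he hF').1 hc)⟩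

lemma card_sum_slices (τ : ∀ j : Fin (s' + 1), Fin (ms j) → Fin (rs j)) (n : ℕ) :
    Nat.card {σ : Fin n → Fin k // ¬ AvoidsPat (τ 0) σ ∧ ¬ ContainsMulti τ σ} =
      ∑ e ∈ Finset.range (n + 1),
        Nat.card {w : Fin e → Fin k // FirstEnd (τ 0) w e} *
          Nat.card {u : Fin (n - e) → Fin k //
            ¬ ContainsMulti (fun j : Fin s' => τ j.succ) u} := by
  classical
  have key : Nat.card {σ : Fin n → Fin k // ¬ AvoidsPat (τ 0) σ ∧ ¬ ContainsMulti τ σ} =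
      Nat.card (Σ e : Fin (n + 1),
        {σ : Fin n → Fin k // FirstEnd (τ 0) σ (e : ℕ) ∧ ¬ ContainsMulti τ σ}) := by
    refine Nat.card_congr ?_
    refine
      { toFun := fun σp =>
          ⟨⟨(exists_firstEnd σp.2.1).choose,
            by have := firstEnd_le (exists_firstEnd σp.2.1).choose_spec; omega⟩,
           ⟨σp.1, (exists_firstEnd σp.2.1).choose_spec, σp.2.2⟩⟩
        invFun := fun x =>
          ⟨x.2.1, by
            obtain ⟨⟨i, hie, hocc⟩, -⟩ := x.2.2.1
            exact fun hA => hA i hocc, x.2.2.2⟩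
        left_inv := fun σp => Subtype.ext rfl
        right_inv := ?_ }
    rintro ⟨⟨ev, hev⟩, σ, hF, hC⟩
    have hne : ¬ AvoidsPat (τ 0) σ := by
      obtain ⟨⟨i, hie, hocc⟩, -⟩ := hF
      exact fun hA => hA i hocc
    have heq : (exists_firstEnd (p := τ 0) (σ := σ) hne).choose = ev :=
      firstEnd_unique (exists_firstEnd hne).choose_spec hF
    -- reduce to componentwise equality
    refine Sigma.ext (Fin.ext ?_) ?_
    · simpa using heq
    · refine (Subtype.heq_iff_coe_eq ?_).2 rfl
      intro x
      simp only [heq]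
  rw [key, nat_card_sigma,
    Fin.sum_univ_eq_sum_range
      (fun t => Nat.card {σ : Fin n → Fin k // FirstEnd (τ 0) σ t ∧ ¬ ContainsMulti τ σ})
      (n + 1)]
  refine Finset.sum_congr rfl fun e hee => ?_
  have he : e ≤ n := by
    simp only [Finset.mem_range] at hee
    omega
  exact card_slice τ he

lemma gf_step (τ : ∀ j : Fin (s' + 1), Fin (ms j) → Fin (rs j)) (hm0 : 1 ≤ ms 0) :
    Amulti τ k = Apat (τ 0) k +
      (((k : PowerSeries ℚ) * PowerSeries.X - 1) * Apat (τ 0) k + 1) *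
        Amulti (fun j : Fin s' => τ j.succ) k := by
  classical
  set D : ℕ → ℕ := fun e => Nat.card {w : Fin e → Fin k // FirstEnd (τ 0) w e} with hD
  have hDser : (PowerSeries.mk fun e => (D e : ℚ)) =
      ((k : PowerSeries ℚ) * PowerSeries.X - 1) * Apat (τ 0) k + 1 := by
    have hxp : ((k : PowerSeries ℚ) * PowerSeries.X - 1) * Apat (τ 0) k + 1 =
        PowerSeries.C (k : ℚ) * (PowerSeries.X * Apat (τ 0) k) - Apat (τ 0) k + 1 := by
      rw [← map_natCast (PowerSeries.C (R := ℚ)) k]; ring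
    rw [hxp]
    ext n
    rw [PowerSeries.coeff_mk, map_add, map_sub, PowerSeries.coeff_C_mul]
    cases n with
    | zero =>
      have h1 : (PowerSeries.coeff 0) (PowerSeries.X * Apat (τ 0) k) = 0 := by
        simp [PowerSeries.coeff_zero_eq_constantCoeff, map_mul]
      have h2 : (PowerSeries.coeff 0) (Apat (τ 0) k) = 1 := by
        simp only [Apat, PowerSeries.coeff_mk]
        rw [card_avoids_zero hm0 (τ 0)]
        norm_num
      have h3 : D 0 = 0 := card_firstEnd_zero hm0 (τ 0)
      simp [h1, h2, h3]
    | succ f =>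
      rw [PowerSeries.coeff_succ_X_mul]
      have hstep := card_step hm0 (τ 0) (k := k) f
      have h2 : (PowerSeries.coeff f) (Apat (τ 0) k) =
          (Nat.card {σ : Fin f → Fin k // AvoidsPat (τ 0) σ} : ℚ) := by
        simp [Apat, PowerSeries.coeff_mk]
      have h3 : (PowerSeries.coeff (f + 1)) (Apat (τ 0) k) =
          (Nat.card {σ : Fin (f + 1) → Fin k // AvoidsPat (τ 0) σ} : ℚ) := by
        simp [Apat, PowerSeries.coeff_mk]
      rw [h2, h3, PowerSeries.coeff_one, if_neg (by omega : ¬ (f + 1 = 0))]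
      have : ((Nat.card {σ : Fin f → Fin k // AvoidsPat (τ 0) σ} * k : ℕ) : ℚ) =
          ((Nat.card {w : Fin (f+1) → Fin k // AvoidsPat (τ 0) w} +
            D (f + 1) : ℕ) : ℚ) := by rw [hstep]
      push_cast at this
      linarith
  have hmain : ∀ n : ℕ, Nat.card {σ : Fin n → Fin k // ¬ ContainsMulti τ σ} =
      Nat.card {σ : Fin n → Fin k // AvoidsPat (τ 0) σ} +
        ∑ e ∈ Finset.range (n + 1), D e *
          Nat.card {u : Fin (n - e) → Fin k //
            ¬ ContainsMulti (fun j : Fin s' => τ j.succ) u} := by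
    intro n
    rw [card_split (fun σ : Fin n → Fin k => ¬ ContainsMulti τ σ) (AvoidsPat (τ 0))]
    congr 1
    · refine Nat.card_congr (Equiv.subtypeEquivRight fun σ => ⟨And.right, fun hA => ⟨?_, hA⟩⟩)
      rintro ⟨i, hch, ho⟩
      exact hA (i 0) (ho 0)
    · rw [← card_sum_slices τ n]
      exact Nat.card_congr (Equiv.subtypeEquivRight fun σ => ⟨fun h => ⟨h.2, h.1⟩,
        fun h => ⟨h.2, h.1⟩⟩)
  rw [← hDser]
  ext n
  rw [map_add, PowerSeries.coeff_mul, Finset.Nat.sum_antidiagonal_eq_sum_range_succ_mk]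
  simp only [Amulti, Apat, PowerSeries.coeff_mk]
  rw [hmain n]
  push_cast
  ring

end Multi

lemma amulti_zero {ms rs : Fin 0 → ℕ} (τ : ∀ j : Fin 0, Fin (ms j) → Fin (rs j)) :
    Amulti τ k = 0 := by
  ext n
  have : IsEmpty {σ : Fin n → Fin k // ¬ ContainsMulti τ σ} := by
    refine ⟨fun σ => σ.2 ⟨fun j => j.elim0, fun j => j.elim0, fun j => j.elim0⟩⟩
  simp [Amulti, PowerSeries.coeff_mk, Nat.card_of_isEmpty]

lemma prod_Iio_succ {M : Type*} [CommMonoid M] {N : ℕ} (f : Fin (N + 1) → M) (j : Fin N) :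
    ∏ i ∈ Finset.Iio j.succ, f i = f 0 * ∏ i ∈ Finset.Iio j, f i.succ := by
  have hset : Finset.Iio j.succ =
      insert (0 : Fin (N + 1)) ((Finset.Iio j).map ⟨Fin.succ, Fin.succ_injective N⟩) := by
    ext a
    simp only [Finset.mem_Iio, Finset.mem_insert, Finset.mem_map,
      Function.Embedding.coeFn_mk]
    constructor
    · intro ha
      rcases Fin.eq_zero_or_eq_succ a with h0 | ⟨b, rfl⟩
      · exact Or.inl h0
      · exact Or.inr ⟨b, Fin.succ_lt_succ_iff.1 ha, rfl⟩
    · rintro (rfl | ⟨b, hb, rfl⟩)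
      · exact Fin.succ_pos j
      · exact Fin.succ_lt_succ_iff.2 hb
  rw [hset, Finset.prod_insert (by
    intro h
    simp only [Finset.mem_map, Function.Embedding.coeFn_mk] at h
    obtain ⟨b, -, hb⟩ := h
    exact Fin.succ_ne_zero b hb), Finset.prod_map]
  rfl

lemma main (k : ℕ) : ∀ (s : ℕ) {ms rs : Fin s → ℕ}
    (τ : ∀ j : Fin s, Fin (ms j) → Fin (rs j)), (∀ j, 1 ≤ ms j) →
    Amulti τ k = ∑ j : Fin s, Apat (τ j) k *
      ∏ i ∈ Finset.Iio j,
        (((k : PowerSeries ℚ) * PowerSeries.X - 1) * Apat (τ i) k + 1) := by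
  intro s
  induction s with
  | zero =>
    intro ms rs τ hm
    rw [amulti_zero]
    simp
  | succ s' ih =>
    intro ms rs τ hm
    rw [gf_step τ (hm 0), ih (fun j : Fin s' => τ j.succ) (fun j => hm j.succ),
      Fin.sum_univ_succ]
    congr 1
    · have hempty : Finset.Iio (0 : Fin (s' + 1)) = ∅ :=
        Finset.eq_empty_of_forall_notMem fun a ha => by
          simp only [Finset.mem_Iio] at ha
          exact absurd ha (by simp)
      rw [hempty, Finset.prod_empty, mul_one]
    · rw [Finset.mul_sum]
      refine Finset.sum_congr rfl fun j _ => ?_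
      rw [prod_Iio_succ]
      ring

end Stmt14

theorem stmt14 (s : ℕ) (hs : 1 ≤ s) (m r : Fin s → ℕ) (hm : ∀ j, 1 ≤ m j)
    (τ : ∀ j : Fin s, Fin (m j) → Fin (r j)) (k : ℕ) (hk : 1 ≤ k) :
    Amulti τ k =
      ∑ j : Fin s, Apat (τ j) k *
        ∏ i ∈ Finset.Iio j,
          (((k : PowerSeries ℚ) * PowerSeries.X - 1) * Apat (τ i) k + 1) := by
  exact Stmt14.main k s τ hm
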